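/- The sum over all perfect powers m ≥ 4 (counted once each, without repetition) of 1/(m - 1) equals 1. -/

import Mathlib

/-- A perfect power: an integer of the form `m^k` with `m ≥ 1` and `k ≥ 2`. -/
def IsPerfectPower (n : ℕ) : Prop := ∃ m k : ℕ, 1 ≤ m ∧ 2 ≤ k ∧ n = m ^ k

open Nat Finsupp

lemma gcd_exp_eq_one {b : ℕ} (hb : 2 ≤ b) (hnp : ¬ IsPerfectPower b) :
    b.factorization.support.gcd b.factorization = 1 := by
  set g := b.factorization.support.gcd b.factorization with hg
  have hb0 : b ≠ 0 := by omega
  have hsupp : b.factorization.support.Nonempty := by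
    rw [Nat.support_factorization]
    exact (Nat.nonempty_primeFactors).2 (by omega)
  have hgpos : g ≠ 0 := by
    intro h0
    obtain ⟨p, hp⟩ := hsupp
    have := Finset.gcd_eq_zero_iff.mp h0 p hp
    exact (Finsupp.mem_support_iff.mp hp) this
  by_contra hne
  have hg2 : 2 ≤ g := by omega
  apply hnp
  refine ⟨b.factorization.prod fun p e => p ^ (e / g), g, ?_, hg2, ?_⟩
  · exact Nat.one_le_iff_ne_zero.mpr (by
      rw [Finsupp.prod]
      exact Finset.prod_ne_zero_iff.mpr fun p hp => by
        have := Nat.prime_of_mem_primeFactors (Nat.support_factorization b ▸ hp)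
        exact pow_ne_zero _ this.pos.ne')
  · conv_lhs => rw [← Nat.factorization_prod_pow_eq_self hb0]
    rw [Finsupp.prod, Finsupp.prod, ← Finset.prod_pow]
    refine Finset.prod_congr rfl fun p hp => ?_
    rw [← pow_mul, Nat.div_mul_cancel (Finset.gcd_dvd hp)]

lemma key {b : ℕ} (hb : 2 ≤ b) (hnp : ¬ IsPerfectPower b) {a s k : ℕ} (hk : 1 ≤ k)
    (h : b ^ s = a ^ k) (ha : a ≠ 0) : ∃ r, a = b ^ r ∧ s = r * k := by
  have hb0 : b ≠ 0 := by omega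
  have hfac : ∀ p, s * b.factorization p = k * a.factorization p := by
    intro p
    have := congrArg Nat.factorization h
    rw [Nat.factorization_pow, Nat.factorization_pow] at this
    have := congrArg (fun f => f p) this
    simpa using this
  have hks : k ∣ s := by
    have h1 : k ∣ b.factorization.support.gcd (fun p => s * b.factorization p) :=
      Finset.dvd_gcd fun p _ => (hfac p) ▸ Dvd.intro _ rfl
    rw [Finset.gcd_mul_left, gcd_exp_eq_one hb hnp, mul_one] at h1
    simpa using h1
  refine ⟨s / k, ?_, (Nat.div_mul_cancel hks).symm⟩
  refine (Nat.eq_of_factorization_eq ha (pow_ne_zero _ hb0) fun p => ?_)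
  have := hfac p
  rw [Nat.factorization_pow]
  simp only [Finsupp.smul_apply, smul_eq_mul]
  have h2 : k * (s / k * b.factorization p) = k * a.factorization p := by
    rw [← mul_assoc, Nat.mul_div_cancel' hks]; exact this
  exact (Nat.eq_of_mul_eq_mul_left (by omega) h2).symm

lemma exists_decomp {n : ℕ} (hn : 2 ≤ n) :
    ∃ b r : ℕ, 2 ≤ b ∧ ¬ IsPerfectPower b ∧ 1 ≤ r ∧ n = b ^ r := by
  induction n using Nat.strong_induction_on with
  | _ n ih =>
    by_cases hp : IsPerfectPower n
    · obtain ⟨a, k, ha, hk, rfl⟩ := hp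
      have ha2 : 2 ≤ a := by
        rcases Nat.lt_or_ge a 2 with h | h
        · interval_cases a <;> simp_all <;> omega
        · exact h
      have halt : a < a ^ k := by
        calc a = a ^ 1 := (pow_one a).symm
        _ < a ^ k := Nat.pow_lt_pow_right ha2 (by omega)
      obtain ⟨b, r, hb, hnp, hr, rfl⟩ := ih a halt ha2
      exact ⟨b, r * k, hb, hnp, Nat.mul_pos hr (by omega), by rw [pow_mul]⟩
    · exact ⟨n, 1, hn, hp, le_refl _, (pow_one n).symm⟩

lemma decomp_unique {b₁ b₂ r₁ r₂ : ℕ} (hb₁ : 2 ≤ b₁) (hnp₁ : ¬ IsPerfectPower b₁)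
    (hb₂ : 2 ≤ b₂) (hnp₂ : ¬ IsPerfectPower b₂) (hr₁ : 1 ≤ r₁) (hr₂ : 1 ≤ r₂)
    (h : b₁ ^ r₁ = b₂ ^ r₂) : b₁ = b₂ ∧ r₁ = r₂ := by
  obtain ⟨t, hbt, hst⟩ := key hb₁ hnp₁ hr₂ h (by omega)
  have ht1 : t = 1 := by
    by_contra hne
    have ht0 : t ≠ 0 := by rintro rfl; simp at hbt; omega
    exact hnp₂ ⟨b₁, t, by omega, by omega, hbt⟩
  subst ht1
  simp at hbt
  constructor
  · omega
  · subst hbt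
    exact (Nat.pow_right_injective hb₁ h)
section
open Filter Topology

def shiftEquiv' (c : ℕ) : ℕ ≃ {n : ℕ // c ≤ n} where
  toFun n := ⟨n + c, by omega⟩
  invFun a := a.1 - c
  left_inv n := by simp
  right_inv a := by have := a.2; ext; simp; omega

lemma hasSum_tele : HasSum (fun n : ℕ => (1:ℝ)/((n+2)*(n+1))) 1 := by
  rw [hasSum_iff_tendsto_nat_of_nonneg (fun n => by positivity)]
  have key : ∀ n : ℕ, ∑ i ∈ Finset.range n, (1:ℝ)/((i+2)*(i+1)) = 1 - 1/(n+1) := by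
    intro n
    induction n with
    | zero => simp
    | succ n ih =>
      rw [Finset.sum_range_succ, ih]
      have h1 : ((n:ℝ)+1) ≠ 0 := by positivity
      have h2 : ((n:ℝ)+2) ≠ 0 := by positivity
      push_cast
      field_simp
      ring
  simp only [key]
  have := tendsto_one_div_add_atTop_nhds_zero_nat (𝕜 := ℝ)
  simpa using tendsto_const_nhds.sub this

lemma geom_shift {x : ℝ} (h0 : 0 ≤ x) (h1 : x < 1) (c : ℕ) :
    HasSum (fun k : ℕ => x^(k+c)) (x^c * (1-x)⁻¹) := by
  simpa [pow_add, mul_comm] using (hasSum_geometric_of_lt_one h0 h1).mul_left (x^c)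

lemma geom_sub {a : ℕ} (ha : 2 ≤ a) :
    HasSum (fun k : {k : ℕ // 2 ≤ k} => ((1:ℝ)/a)^(k:ℕ)) (1/((a:ℝ)*((a:ℝ)-1))) := by
  have haR : (2:ℝ) ≤ (a:ℝ) := by exact_mod_cast ha
  have h0 : (0:ℝ) ≤ 1/a := by positivity
  have h1 : (1:ℝ)/a < 1 := by
    rw [div_lt_one (by linarith)]; linarith
  have h := geom_shift h0 h1 2
  have hval : ((1:ℝ)/a)^2 * (1 - 1/(a:ℝ))⁻¹ = 1/((a:ℝ)*((a:ℝ)-1)) := by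
    have ha0 : (a:ℝ) ≠ 0 := by linarith
    have ha1 : (a:ℝ) - 1 ≠ 0 := by intro h'; nlinarith
    field_simp
  rw [hval] at h
  exact (Equiv.hasSum_iff (shiftEquiv' 2)).mp h

lemma geom_sub1 {m : ℕ} (hm : 2 ≤ m) :
    HasSum (fun j : {j : ℕ // 1 ≤ j} => ((1:ℝ)/m)^(j:ℕ)) (1/((m:ℝ)-1)) := by
  have haR : (2:ℝ) ≤ (m:ℝ) := by exact_mod_cast hm
  have h0 : (0:ℝ) ≤ 1/m := by positivity
  have h1 : (1:ℝ)/m < 1 := by rw [div_lt_one (by linarith)]; linarith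
  have h := geom_shift h0 h1 1
  have hval : ((1:ℝ)/m)^1 * (1 - 1/(m:ℝ))⁻¹ = 1/((m:ℝ)-1) := by
    have ha0 : (m:ℝ) ≠ 0 := by linarith
    have ha1 : (m:ℝ) - 1 ≠ 0 := by intro h'; nlinarith
    field_simp
  rw [hval] at h
  exact (Equiv.hasSum_iff (shiftEquiv' 1)).mp h

lemma hasSum_outer : HasSum (fun a : {a : ℕ // 2 ≤ a} => 1/((a:ℝ)*((a:ℝ)-1))) 1 := by
  refine (Equiv.hasSum_iff (shiftEquiv' 2)).mp ?_
  have : (fun a : {a : ℕ // 2 ≤ a} => 1/((a:ℝ)*((a:ℝ)-1))) ∘ (shiftEquiv' 2)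
      = fun n : ℕ => (1:ℝ)/((n+2)*(n+1)) := by
    funext n
    simp only [Function.comp, shiftEquiv', Equiv.coe_fn_mk]
    push_cast
    ring_nf
  rw [this]
  exact hasSum_tele
end

section Main
open Filter Topology

abbrev NPow' := {b : ℕ // 2 ≤ b ∧ ¬ IsPerfectPower b}
abbrev TT := NPow' × {r : ℕ // 1 ≤ r} × {k : ℕ // 2 ≤ k}
abbrev AA := {a : ℕ // 2 ≤ a} × {k : ℕ // 2 ≤ k}
abbrev BB := {m : ℕ // 4 ≤ m ∧ IsPerfectPower m} × {j : ℕ // 1 ≤ j}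

noncomputable def fA : AA → ℝ := fun p => ((1:ℝ)/(p.1:ℕ))^(p.2:ℕ)
noncomputable def fB : BB → ℝ := fun p => ((1:ℝ)/(p.1:ℕ))^(p.2:ℕ)
noncomputable def gT : TT → ℝ := fun t => ((1:ℝ)/(t.1:ℕ))^((t.2.1:ℕ) * (t.2.2:ℕ))

def eAfun : TT → AA := fun t =>
  (⟨(t.1:ℕ) ^ (t.2.1:ℕ), le_trans t.1.2.1 (Nat.le_self_pow (by have := t.2.1.2; omega) _)⟩, t.2.2)

def eBfun : TT → BB := fun t =>
  (⟨(t.1:ℕ) ^ (t.2.2:ℕ),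
    ⟨by
      calc (4:ℕ) = 2^2 := rfl
      _ ≤ (t.1:ℕ)^2 := Nat.pow_le_pow_left t.1.2.1 2
      _ ≤ (t.1:ℕ)^(t.2.2:ℕ) := Nat.pow_le_pow_right (by have := t.1.2.1; omega) t.2.2.2,
     ⟨(t.1:ℕ), (t.2.2:ℕ), by have := t.1.2.1; omega, t.2.2.2, rfl⟩⟩⟩, t.2.1)

lemma eAfun_bij : Function.Bijective eAfun := by
  constructor
  · rintro ⟨⟨b₁, hb₁, hnp₁⟩, ⟨r₁, hr₁⟩, ⟨k₁, hk₁⟩⟩ ⟨⟨b₂, hb₂, hnp₂⟩, ⟨r₂, hr₂⟩, ⟨k₂, hk₂⟩⟩ h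
    simp only [eAfun, Prod.mk.injEq, Subtype.mk.injEq] at h
    obtain ⟨h1, h2⟩ := h
    obtain ⟨hb, hr⟩ := decomp_unique hb₁ hnp₁ hb₂ hnp₂ hr₁ hr₂ h1
    simp_all
  · rintro ⟨⟨a, ha⟩, k⟩
    obtain ⟨b, r, hb, hnp, hr, hab⟩ := exists_decomp ha
    exact ⟨⟨⟨b, hb, hnp⟩, ⟨r, hr⟩, k⟩, by simp [eAfun, hab]⟩

lemma eBfun_bij : Function.Bijective eBfun := by
  constructor
  · rintro ⟨⟨b₁, hb₁, hnp₁⟩, ⟨r₁, hr₁⟩, ⟨k₁, hk₁⟩⟩ ⟨⟨b₂, hb₂, hnp₂⟩, ⟨r₂, hr₂⟩, ⟨k₂, hk₂⟩⟩ h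
    simp only [eBfun, Prod.mk.injEq, Subtype.mk.injEq] at h
    obtain ⟨h1, h2⟩ := h
    obtain ⟨hb, hk⟩ := decomp_unique hb₁ hnp₁ hb₂ hnp₂ (by omega) (by omega) h1
    simp_all
  · rintro ⟨⟨m, hm, hpp⟩, j⟩
    obtain ⟨b, s, hb, hnp, hs, hmb⟩ := exists_decomp (show 2 ≤ m by omega)
    have hs2 : 2 ≤ s := by
      rcases Nat.lt_or_ge s 2 with h | h
      · interval_cases s
        rw [pow_one] at hmb; subst hmb; exact absurd hpp hnp
      · exact h
    exact ⟨⟨⟨b, hb, hnp⟩, j, ⟨s, hs2⟩⟩, by simp [eBfun, hmb]⟩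

noncomputable def eA : TT ≃ AA := Equiv.ofBijective eAfun eAfun_bij
noncomputable def eB : TT ≃ BB := Equiv.ofBijective eBfun eBfun_bij

lemma fA_comp : fA ∘ eA = gT := by
  funext t
  simp only [Function.comp, fA, gT, eA, Equiv.ofBijective_apply, eAfun]
  push_cast
  rw [div_pow, div_pow, one_pow, one_pow, ← pow_mul]

lemma fB_comp : fB ∘ eB = gT := by
  funext t
  simp only [Function.comp, fB, gT, eB, Equiv.ofBijective_apply, eBfun]
  push_cast
  rw [div_pow, div_pow, one_pow, one_pow, ← pow_mul, mul_comm]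

lemma summable_fA : Summable fA := by
  refine (summable_prod_of_nonneg ?_).mpr ⟨fun a => (geom_sub a.2).summable, ?_⟩
  · intro p
    apply pow_nonneg
    positivity
  · exact hasSum_outer.summable.congr fun a => (geom_sub a.2).tsum_eq.symm

lemma tsum_fA : ∑' p : AA, fA p = 1 := by
  rw [Summable.tsum_prod' summable_fA (fun a => (geom_sub a.2).summable)]
  calc ∑' (a : {a : ℕ // 2 ≤ a}), ∑' (k : {k : ℕ // 2 ≤ k}), fA (a, k)
      = ∑' (a : {a : ℕ // 2 ≤ a}), 1/((a:ℝ)*((a:ℝ)-1)) :=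
        tsum_congr fun a => (geom_sub a.2).tsum_eq
    _ = 1 := hasSum_outer.tsum_eq

lemma summable_fB : Summable fB := by
  have h1 : Summable gT := fA_comp ▸ (eA.summable_iff.mpr summable_fA)
  exact eB.summable_iff.mp (fB_comp ▸ h1)

theorem goldbach_euler_sum :
    ∑' m : {m : ℕ // 4 ≤ m ∧ IsPerfectPower m}, (1 : ℝ) / ((m : ℕ) - 1 : ℝ) = 1 := by
  have h1 : ∀ m : {m : ℕ // 4 ≤ m ∧ IsPerfectPower m},
      (1 : ℝ) / ((m : ℕ) - 1 : ℝ) = ∑' j : {j : ℕ // 1 ≤ j}, fB (m, j) :=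
    fun m => (geom_sub1 (show 2 ≤ (m:ℕ) by have := m.2.1; omega)).tsum_eq.symm
  calc ∑' m : {m : ℕ // 4 ≤ m ∧ IsPerfectPower m}, (1 : ℝ) / ((m : ℕ) - 1 : ℝ)
      = ∑' (m : {m : ℕ // 4 ≤ m ∧ IsPerfectPower m}) (j : {j : ℕ // 1 ≤ j}), fB (m, j) :=
        tsum_congr h1
    _ = ∑' p : BB, fB p :=
        (Summable.tsum_prod' summable_fB (fun m =>
          (geom_sub1 (show 2 ≤ (m:ℕ) by have := m.2.1; omega)).summable)).symm
    _ = ∑' t : TT, gT t := by rw [← eB.tsum_eq fB]; exact tsum_congr fun t => congrFun fB_comp t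
    _ = ∑' p : AA, fA p := by rw [← eA.tsum_eq fA]; exact tsum_congr fun t => (congrFun fA_comp t).symm
    _ = 1 := tsum_fA
end Main
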